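/- (Kinetic energy as a squared velocity norm through the Rigid Body Inertial Map.) Let μ be a finite Borel measure on ℝ³ with total mass M = μ(ℝ³) > 0 and ∫‖u‖² dμ(u) < ∞, assume ∫ u_i dμ(u) = 0 for i = 1, 2, 3, and assume the Distributional Inertia Matrix is diagonal: b_{ij} = ∫ u_i u_j dμ(u) = 0 for i ≠ j, with diagonal entries b_i = ∫ u_i² dμ(u). Let x_c : ℝ → ℝ³ and e₁, e₂, e₃ : ℝ → ℝ³ be differentiable, define x(u, t) = x_c(t) + u₁e₁(t) + u₂e₂(t) + u₃e₃(t), and define the curve z : ℝ → ℝ¹² by z(t) = (√M·x_c(t); √b₁·e₁(t); √b₂·e₂(t); √b₃·e₃(t)). Then for every t, (1/2)·∫ ‖∂x/∂t (u, t)‖² dμ(u) = (1/2)·‖ż(t)‖². -/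

import Mathlib

/-!
STATEMENT 10 (Kinetic energy as a squared velocity norm through the Rigid Body Inertial
Map): Let `μ` be a finite Borel measure on `ℝ³` with total mass `M > 0`,
`∫ ‖u‖² dμ < ∞`, `∫ uᵢ dμ = 0`, and diagonal Distributional Inertia Matrix
(`∫ uᵢ uⱼ dμ = 0` for `i ≠ j`, with diagonal entries `bᵢ = ∫ uᵢ² dμ`). For differentiable
`x_c, e₁, e₂, e₃ : ℝ → ℝ³`, `x(u, t) = x_c(t) + ∑ᵢ uᵢ eᵢ(t)`, and the curve
`z(t) = (√M x_c(t); √b₁ e₁(t); √b₂ e₂(t); √b₃ e₃(t)) ∈ ℝ¹²` (an `L²`-stack of four copies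
of `ℝ³`), we have `(1/2) ∫ ‖∂x/∂t(u,t)‖² dμ(u) = (1/2) ‖ż(t)‖²` for every `t`.
-/

open MeasureTheory RealInnerProductSpace

set_option maxHeartbeats 1000000 in
theorem kinetic_energy_eq_squared_velocity_of_inertial_map
    (μ : Measure (EuclideanSpace ℝ (Fin 3))) [IsFiniteMeasure μ]
    (hM : 0 < (μ Set.univ).toReal)
    (hInt : Integrable (fun u : EuclideanSpace ℝ (Fin 3) => ‖u‖ ^ 2) μ)
    (hcom : ∀ i : Fin 3, ∫ u, u i ∂μ = 0)
    (hdiag : ∀ i j : Fin 3, i ≠ j → ∫ u, u i * u j ∂μ = 0)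
    (xc : ℝ → EuclideanSpace ℝ (Fin 3))
    (e : Fin 3 → ℝ → EuclideanSpace ℝ (Fin 3))
    (hxc : Differentiable ℝ xc) (he : ∀ i, Differentiable ℝ (e i))
    (z : ℝ → PiLp 2 (fun _ : Fin 4 => EuclideanSpace ℝ (Fin 3)))
    (hz : ∀ s, z s =
      (WithLp.equiv 2 (∀ _ : Fin 4, EuclideanSpace ℝ (Fin 3))).symm
        ![Real.sqrt ((μ Set.univ).toReal) • xc s,
          Real.sqrt (∫ u, u 0 ^ 2 ∂μ) • e 0 s,
          Real.sqrt (∫ u, u 1 ^ 2 ∂μ) • e 1 s,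
          Real.sqrt (∫ u, u 2 ^ 2 ∂μ) • e 2 s])
    (t : ℝ) :
    (1 / 2) * ∫ u, ‖deriv (fun s => xc s + ∑ i : Fin 3, u i • e i s) t‖ ^ 2 ∂μ =
      (1 / 2) * ‖deriv z t‖ ^ 2 := by
  classical
  set M := (μ Set.univ).toReal with hMdef
  set v := deriv xc t with hv
  set w : Fin 3 → EuclideanSpace ℝ (Fin 3) := fun i => deriv (e i) t with hw
  have hvd : HasDerivAt xc v t := (hxc t).hasDerivAt
  have hwd : ∀ i, HasDerivAt (e i) (w i) t := fun i => ((he i) t).hasDerivAt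
  -- pointwise derivative
  have hder : ∀ u : EuclideanSpace ℝ (Fin 3),
      deriv (fun s => xc s + ∑ i : Fin 3, u i • e i s) t
        = v + ∑ i : Fin 3, u i • w i := by
    intro u
    exact (hvd.fun_add (HasDerivAt.fun_sum fun i _ => (hwd i).fun_const_smul (u i))).deriv
  -- coordinate functions are continuous
  have hcont : ∀ i : Fin 3, Continuous fun u : EuclideanSpace ℝ (Fin 3) => u i :=
    fun i => (EuclideanSpace.proj (𝕜 := ℝ) i).continuous
  have habs : ∀ (i : Fin 3) (u : EuclideanSpace ℝ (Fin 3)), |u i| ≤ ‖u‖ := by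
    intro i u
    have h2 : ‖u i‖ ^ 2 ≤ ‖u‖ ^ 2 := by
      rw [PiLp.norm_sq_eq_of_L2]
      exact Finset.single_le_sum (f := fun j => ‖u j‖ ^ 2)
        (fun j _ => by positivity) (Finset.mem_univ i)
    rw [Real.norm_eq_abs] at h2
    nlinarith [abs_nonneg (u i), norm_nonneg u]
  -- integrability facts
  have hnorm_int : Integrable (fun u : EuclideanSpace ℝ (Fin 3) => ‖u‖) μ := by
    refine ((integrable_const (1 : ℝ)).add hInt).mono'
      continuous_norm.aestronglyMeasurable ?_
    filter_upwards with u
    have := norm_nonneg u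
    simp only [Pi.add_apply, Real.norm_eq_abs, abs_of_nonneg this]
    nlinarith
  have hI1 : ∀ i : Fin 3, Integrable (fun u : EuclideanSpace ℝ (Fin 3) => u i) μ := by
    intro i
    refine hnorm_int.mono' (hcont i).aestronglyMeasurable ?_
    filter_upwards with u
    simpa using habs i u
  have hI2 : ∀ i j : Fin 3,
      Integrable (fun u : EuclideanSpace ℝ (Fin 3) => u i * u j) μ := by
    intro i j
    refine hInt.mono' ((hcont i).mul (hcont j)).aestronglyMeasurable ?_
    filter_upwards with u
    rw [Real.norm_eq_abs, abs_mul]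
    nlinarith [habs i u, habs j u, abs_nonneg (u i), abs_nonneg (u j), norm_nonneg u]
  -- pointwise expansion of the squared norm
  have hpt : ∀ u : EuclideanSpace ℝ (Fin 3),
      ‖v + ∑ i : Fin 3, u i • w i‖ ^ 2
        = ‖v‖ ^ 2 + ((∑ i : Fin 3, u i * (2 * ⟪v, w i⟫))
          + ∑ i : Fin 3, ∑ j : Fin 3, (u i * u j) * ⟪w i, w j⟫) := by
    intro u
    rw [← real_inner_self_eq_norm_sq]
    simp only [inner_add_left, inner_add_right, inner_sum, sum_inner,
      real_inner_smul_left, real_inner_smul_right, real_inner_self_eq_norm_sq,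
      Fin.sum_univ_three]
    simp only [real_inner_comm]
    simp only [norm_smul, Real.norm_eq_abs, mul_pow, sq_abs]
    ring
  have hbnn : ∀ i : Fin 3, (0:ℝ) ≤ ∫ u, u i ^ 2 ∂μ :=
    fun i => integral_nonneg fun u => sq_nonneg _
  have hIF1 : Integrable (fun u : EuclideanSpace ℝ (Fin 3) =>
      ∑ i : Fin 3, u i * (2 * ⟪v, w i⟫)) μ :=
    integrable_finset_sum _ fun i _ => (hI1 i).mul_const _
  have hIF2 : Integrable (fun u : EuclideanSpace ℝ (Fin 3) =>
      ∑ i : Fin 3, ∑ j : Fin 3, (u i * u j) * ⟪w i, w j⟫) μ :=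
    integrable_finset_sum _ fun i _ =>
      integrable_finset_sum _ fun j _ => (hI2 i j).mul_const _
  have hLHS : ∫ u, ‖deriv (fun s => xc s + ∑ i : Fin 3, u i • e i s) t‖ ^ 2 ∂μ
      = M * ‖v‖ ^ 2 + ∑ i : Fin 3, (∫ u, u i ^ 2 ∂μ) * ‖w i‖ ^ 2 := by
    have hcongr : ∫ u, ‖deriv (fun s => xc s + ∑ i : Fin 3, u i • e i s) t‖ ^ 2 ∂μ
        = ∫ u, (‖v‖ ^ 2 + ((∑ i : Fin 3, u i * (2 * ⟪v, w i⟫))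
          + ∑ i : Fin 3, ∑ j : Fin 3, (u i * u j) * ⟪w i, w j⟫)) ∂μ := by
      refine integral_congr_ae (Filter.Eventually.of_forall fun u => ?_)
      beta_reduce
      rw [hder u, hpt u]
    have hIF12 : Integrable (fun u : EuclideanSpace ℝ (Fin 3) =>
        (∑ i : Fin 3, u i * (2 * ⟪v, w i⟫))
          + ∑ i : Fin 3, ∑ j : Fin 3, (u i * u j) * ⟪w i, w j⟫) μ := hIF1.add hIF2
    rw [hcongr, integral_add (integrable_const _) hIF12,
      integral_add hIF1 hIF2, integral_const,
      integral_finset_sum _ (fun i _ => (hI1 i).mul_const _),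
      integral_finset_sum _ (fun i _ =>
        integrable_finset_sum _ fun j _ => (hI2 i j).mul_const _)]
    have h1 : ∀ i : Fin 3, (∫ u, u i * (2 * ⟪v, w i⟫) ∂μ) = 0 := by
      intro i; rw [integral_mul_const, hcom i, zero_mul]
    have h2 : ∀ i : Fin 3,
        (∫ u, ∑ j : Fin 3, (u i * u j) * ⟪w i, w j⟫ ∂μ)
          = (∫ u, u i ^ 2 ∂μ) * ‖w i‖ ^ 2 := by
      intro i
      rw [integral_finset_sum _ (fun j _ => (hI2 i j).mul_const _)]
      rw [Finset.sum_eq_single i]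
      · rw [integral_mul_const, ← real_inner_self_eq_norm_sq]
        congr 1
        refine integral_congr_ae (Filter.Eventually.of_forall fun u => ?_)
        beta_reduce
        ring
      · intro j _ hj
        rw [integral_mul_const, hdiag i j (Ne.symm hj), zero_mul]
      · intro h; exact absurd (Finset.mem_univ i) h
    simp only [h1, h2, Finset.sum_const_zero, zero_add, add_zero, smul_eq_mul, measureReal_def, ← hMdef]
  -- derivative of z
  have hg : HasDerivAt (fun s => (![Real.sqrt M • xc s,
        Real.sqrt (∫ u, u 0 ^ 2 ∂μ) • e 0 s,
        Real.sqrt (∫ u, u 1 ^ 2 ∂μ) • e 1 s,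
        Real.sqrt (∫ u, u 2 ^ 2 ∂μ) • e 2 s] : ∀ _ : Fin 4, EuclideanSpace ℝ (Fin 3)))
      ![Real.sqrt M • v, Real.sqrt (∫ u, u 0 ^ 2 ∂μ) • w 0,
        Real.sqrt (∫ u, u 1 ^ 2 ∂μ) • w 1, Real.sqrt (∫ u, u 2 ^ 2 ∂μ) • w 2] t := by
    rw [hasDerivAt_pi]
    intro i
    fin_cases i
    · simpa using hvd.fun_const_smul (Real.sqrt M)
    · simpa using (hwd 0).fun_const_smul (Real.sqrt (∫ u, u 0 ^ 2 ∂μ))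
    · simpa using (hwd 1).fun_const_smul (Real.sqrt (∫ u, u 1 ^ 2 ∂μ))
    · simpa using (hwd 2).fun_const_smul (Real.sqrt (∫ u, u 2 ^ 2 ∂μ))
  set L := (PiLp.continuousLinearEquiv 2 ℝ
      (fun _ : Fin 4 => EuclideanSpace ℝ (Fin 3))).symm with hL
  have hzeq : z = fun s => L ![Real.sqrt M • xc s,
      Real.sqrt (∫ u, u 0 ^ 2 ∂μ) • e 0 s,
      Real.sqrt (∫ u, u 1 ^ 2 ∂μ) • e 1 s,
      Real.sqrt (∫ u, u 2 ^ 2 ∂μ) • e 2 s] := by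
    funext s; rw [hz s]; rfl
  haveI : ContinuousSMul ℝ (PiLp 2 (fun _ : Fin 4 => EuclideanSpace ℝ (Fin 3))) :=
    IsBoundedSMul.continuousSMul
  have hzd : HasDerivAt z (L ![Real.sqrt M • v,
      Real.sqrt (∫ u, u 0 ^ 2 ∂μ) • w 0,
      Real.sqrt (∫ u, u 1 ^ 2 ∂μ) • w 1,
      Real.sqrt (∫ u, u 2 ^ 2 ∂μ) • w 2]) t := by
    rw [hzeq]
    exact (L.hasFDerivAt.comp_hasDerivAt t hg)
  rw [hLHS, hzd.deriv]
  have hnorm : ‖L ![Real.sqrt M • v,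
      Real.sqrt (∫ u, u 0 ^ 2 ∂μ) • w 0,
      Real.sqrt (∫ u, u 1 ^ 2 ∂μ) • w 1,
      Real.sqrt (∫ u, u 2 ^ 2 ∂μ) • w 2]‖ ^ 2
      = M * ‖v‖ ^ 2 + ∑ i : Fin 3, (∫ u, u i ^ 2 ∂μ) * ‖w i‖ ^ 2 := by
    rw [PiLp.norm_sq_eq_of_L2, Fin.sum_univ_four]
    have hLa : ∀ y : (∀ _ : Fin 4, EuclideanSpace ℝ (Fin 3)), ∀ i, (L y) i = y i :=
      fun y i => rfl
    simp only [hLa, Matrix.cons_val_zero, Matrix.cons_val_one, Matrix.head_cons,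
      Matrix.cons_val_two, Matrix.tail_cons, Matrix.cons_val_three,
      norm_smul, Real.norm_eq_abs, abs_of_nonneg (Real.sqrt_nonneg _), mul_pow,
      Real.sq_sqrt hM.le, Real.sq_sqrt (hbnn 0), Real.sq_sqrt (hbnn 1),
      Real.sq_sqrt (hbnn 2), Fin.sum_univ_three]
    ring
  rw [hnorm]
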